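/- arXiv:0709.3275 — 2 statements merged into one kernel-verified Lean document; each statement's English description precedes it below -/
import Mathlib

section
/- Let q ∈ ℂ with 0 < |q| < 1 and let a, b, c ∈ ℂ∖{0} with c ∉ q^ℤ. Define u(z) = (θ_q(z)/θ_q((q/c)z)) · ₂φ₁(aq/c, bq/c; q²/c; q; z) for z ∈ ℂ∖{0} with |z| < 1 and θ_q((q/c)z) ≠ 0. Then u satisfies the basic hypergeometric equation with parameters (a,b,c): for every z with 0 < |z| < 1, abz ≠ c/q, and θ_q((q/c)z) ≠ 0, one has u(q²z) − (((a+b)z − (1 + c/q))/(abz − c/q))·u(qz) + ((z − 1)/(abz − c/q))·u(z) = 0. -/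
/-- The finite q-Pochhammer symbol `(x; q)_n = ∏_{k=0}^{n-1} (1 - x qᵏ)`. -/
noncomputable def qPoch (q x : ℂ) (n : ℕ) : ℂ :=
  ∏ k ∈ Finset.range n, (1 - x * q ^ k)

/-- The infinite q-Pochhammer symbol `(x; q)_∞ = ∏_{k=0}^{∞} (1 - x qᵏ)`. -/
noncomputable def qPochInf (q x : ℂ) : ℂ :=
  ∏' k : ℕ, (1 - x * q ^ k)

/-- The Jacobi theta function `θ_q(z) = (q;q)_∞ (z;q)_∞ (q/z;q)_∞`. -/
noncomputable def thetaQ (q z : ℂ) : ℂ :=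
  qPochInf q q * qPochInf q z * qPochInf q (q / z)

/-- The basic hypergeometric series `₂φ₁(a,b;c;q;z)`. -/
noncomputable def basicHypergeometric (q a b c z : ℂ) : ℂ :=
  ∑' n : ℕ, qPoch q a n * qPoch q b n / (qPoch q c n * qPoch q q n) * z ^ n

open Filter Topology

section Aux

lemma multipliable_aux (q x : ℂ) (hq : ‖q‖ < 1) :
    Multipliable (fun k : ℕ => 1 - x * q ^ k) := by
  by_cases h : ∀ k : ℕ, 1 - x * q ^ k ≠ 0
  · have hxq : Summable (fun n : ℕ => ‖-(x * q ^ n)‖) := by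
      simpa [norm_mul, norm_pow] using
        (summable_geometric_of_lt_one (norm_nonneg q) hq).mul_left ‖x‖
    simpa [sub_eq_add_neg] using multipliable_one_add_of_summable hxq
  · push_neg at h
    obtain ⟨k, hk⟩ := h
    refine ⟨0, ?_⟩
    unfold HasProd
    have : ∀ᶠ s : Finset ℕ in atTop, (∏ i ∈ s, (1 - x * q ^ i)) = 0 := by
      filter_upwards [eventually_ge_atTop {k}] with s hs
      exact Finset.prod_eq_zero (hs (Finset.mem_singleton_self k)) hk
    exact tendsto_const_nhds.congr' (this.mono fun s hs => hs.symm)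

set_option maxHeartbeats 1000000 in
lemma qPochInf_peel (q x : ℂ) (hq : ‖q‖ < 1) :
    qPochInf q x = (1 - x) * qPochInf q (x * q) := by
  unfold qPochInf
  have hm : Multipliable (fun k : ℕ => 1 - x * q ^ (k + 1)) := by
    apply (multipliable_aux q (x * q) hq).congr
    intro k; ring
  rw [tprod_eq_zero_mul' hm]
  simp only [pow_zero, mul_one]
  congr 1
  apply tprod_congr
  intro k
  ring_nf

lemma thetaQ_shift (q z : ℂ) (hq : ‖q‖ < 1) (hq0 : q ≠ 0) (hz : z ≠ 0) :
    thetaQ q (q * z) = -z⁻¹ * thetaQ q z := by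
  unfold thetaQ
  have h1 : qPochInf q z = (1 - z) * qPochInf q (q * z) := by
    rw [qPochInf_peel q z hq]; ring_nf
  have h3 : qPochInf q z⁻¹ = (1 - z⁻¹) * qPochInf q (q / z) := by
    rw [qPochInf_peel q z⁻¹ hq]
    congr 1
    rw [div_eq_mul_inv, mul_comm q z⁻¹]
  have h4 : q / (q * z) = z⁻¹ := by field_simp
  rw [h4, h3, h1]
  have : (1 - z⁻¹) = -z⁻¹ * (1 - z) := by
    rw [neg_mul, mul_sub, mul_one, inv_mul_cancel₀ hz]; ring
  rw [this]; ring

lemma bhg_summable (q a b c : ℂ) (hq : ‖q‖ < 1)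
    (hc : ∀ n : ℕ, c * q ^ n ≠ 1) (w : ℂ) (hw : ‖w‖ < 1) :
    Summable (fun n : ℕ => qPoch q a n * qPoch q b n / (qPoch q c n * qPoch q q n) * w ^ n) := by
  set t : ℕ → ℂ := fun n => qPoch q a n * qPoch q b n / (qPoch q c n * qPoch q q n) with ht
  have hq2 : ∀ n : ℕ, (1 : ℂ) - q ^ (n+1) ≠ 0 := by
    intro n h
    have habs : ‖q ^ (n+1)‖ < 1 := by
      rw [norm_pow]
      exact pow_lt_one₀ (norm_nonneg q) hq (Nat.succ_ne_zero n)
    rw [sub_eq_zero] at h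
    rw [← h] at habs
    simp at habs
  have hcn : ∀ n : ℕ, (1 : ℂ) - c * q ^ n ≠ 0 := by
    intro n h
    rw [sub_eq_zero] at h
    exact hc n h.symm
  have hpc : ∀ n, qPoch q c n ≠ 0 := fun n =>
    Finset.prod_ne_zero_iff.2 fun k _ => hcn k
  have hpq : ∀ n, qPoch q q n ≠ 0 := by
    intro n
    apply Finset.prod_ne_zero_iff.2
    intro k _
    have := hq2 k
    rwa [pow_succ, ← mul_comm q (q ^ k)] at this
  have hrec : ∀ n : ℕ, t (n+1) * ((1 - c*q^n) * (1 - q^(n+1))) =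
      t n * ((1 - a*q^n) * (1 - b*q^n)) := by
    intro n
    have hs : ∀ x : ℂ, qPoch q x (n+1) = qPoch q x n * (1 - x * q ^ n) := fun x =>
      Finset.prod_range_succ _ n
    simp only [ht, hs]
    have h1 : (1 : ℂ) - q * q ^ n = 1 - q ^ (n+1) := by ring
    rw [h1]
    rw [div_mul_eq_mul_div, div_mul_eq_mul_div, div_eq_div_iff
      (mul_ne_zero (mul_ne_zero (hpc n) (hcn n)) (mul_ne_zero (hpq n) (hq2 n)))
      (mul_ne_zero (hpc n) (hpq n))]
    ring
  have h0 : Tendsto (fun n : ℕ => q ^ n) atTop (𝓝 0) :=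
    tendsto_pow_atTop_nhds_zero_of_norm_lt_one (by simpa using hq)
  set ρ : ℕ → ℂ := fun n => w * ((1 - a*q^n) * (1 - b*q^n)) / ((1 - c*q^n) * (1 - q^(n+1))) with hρ
  have hρt : Tendsto ρ atTop (𝓝 w) := by
    have hnum : Tendsto (fun n : ℕ => w * ((1 - a*q^n) * (1 - b*q^n))) atTop (𝓝 (w * 1)) := by
      have h1 : Tendsto (fun n : ℕ => (1 : ℂ) - a*q^n) atTop (𝓝 1) := by
        simpa using tendsto_const_nhds.sub (h0.const_mul a)
      have h2 : Tendsto (fun n : ℕ => (1 : ℂ) - b*q^n) atTop (𝓝 1) := by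
        simpa using tendsto_const_nhds.sub (h0.const_mul b)
      simpa using tendsto_const_nhds.mul (h1.mul h2)
    have hden : Tendsto (fun n : ℕ => ((1 : ℂ) - c*q^n) * (1 - q^(n+1))) atTop (𝓝 1) := by
      have h1 : Tendsto (fun n : ℕ => (1 : ℂ) - c*q^n) atTop (𝓝 1) := by
        simpa using tendsto_const_nhds.sub (h0.const_mul c)
      have h2 : Tendsto (fun n : ℕ => (1 : ℂ) - q^(n+1)) atTop (𝓝 1) := by
        have : Tendsto (fun n : ℕ => q ^ (n+1)) atTop (𝓝 0) := by
          simpa [pow_succ, mul_comm] using h0.const_mul q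
        simpa using tendsto_const_nhds.sub this
      simpa using h1.mul h2
    have := hnum.div hden one_ne_zero
    simp only [mul_one, div_one] at this
    exact this
  have hρn : Tendsto (fun n => ‖ρ n‖) atTop (𝓝 ‖w‖) := hρt.norm
  set r : ℝ := (‖w‖ + 1) / 2 with hr
  have hwr : ‖w‖ < r := by
    rw [hr]
    have : ‖w‖ < 1 := by simpa using hw
    linarith
  have hr1 : r < 1 := by
    rw [hr]
    have : ‖w‖ < 1 := by simpa using hw
    linarith
  apply summable_of_ratio_norm_eventually_le hr1
  filter_upwards [hρn.eventually_lt_const hwr] with n hn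
  have heq : t (n+1) * w^(n+1) = (t n * w^n) * ρ n := by
    have h := hrec n
    have hne : ((1:ℂ) - c*q^n) * (1 - q^(n+1)) ≠ 0 := mul_ne_zero (hcn n) (hq2 n)
    show t (n+1) * w^(n+1) = t n * w^n * (w * ((1 - a*q^n) * (1 - b*q^n)) / ((1 - c*q^n) * (1 - q^(n+1))))
    rw [mul_div_assoc', eq_div_iff hne]
    linear_combination w^(n+1) * h
  calc ‖t (n+1) * w^(n+1)‖ = ‖t n * w^n‖ * ‖ρ n‖ := by rw [heq, norm_mul]
    _ ≤ ‖t n * w^n‖ * r := by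
        apply mul_le_mul_of_nonneg_left (le_of_lt hn) (norm_nonneg _)
    _ = r * ‖t n * w^n‖ := by ring

lemma bhg_eqn (q a b c : ℂ) (hq : ‖q‖ < 1) (hq0 : q ≠ 0)
    (hc : ∀ n : ℕ, c * q ^ n ≠ 1) (z : ℂ) (hz : ‖z‖ < 1) :
    (a*b*z - c/q) * basicHypergeometric q a b c (q^2*z)
      - ((a+b)*z - (1+c/q)) * basicHypergeometric q a b c (q*z)
      + (z-1) * basicHypergeometric q a b c z = 0 := by
  set t : ℕ → ℂ := fun n => qPoch q a n * qPoch q b n / (qPoch q c n * qPoch q q n) with ht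
  have hq2 : ∀ n : ℕ, (1 : ℂ) - q ^ (n+1) ≠ 0 := by
    intro n h
    have habs : ‖q ^ (n+1)‖ < 1 := by
      rw [norm_pow]
      exact pow_lt_one₀ (norm_nonneg q) hq (Nat.succ_ne_zero n)
    rw [sub_eq_zero] at h
    rw [← h] at habs
    simp at habs
  have hcn : ∀ n : ℕ, (1 : ℂ) - c * q ^ n ≠ 0 := by
    intro n h
    rw [sub_eq_zero] at h
    exact hc n h.symm
  have hpc : ∀ n, qPoch q c n ≠ 0 := fun n =>
    Finset.prod_ne_zero_iff.2 fun k _ => hcn k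
  have hpq : ∀ n, qPoch q q n ≠ 0 := by
    intro n
    apply Finset.prod_ne_zero_iff.2
    intro k _
    have := hq2 k
    rwa [pow_succ, ← mul_comm q (q ^ k)] at this
  have hrec : ∀ n : ℕ, t (n+1) * ((1 - c*q^n) * (1 - q^(n+1))) =
      t n * ((1 - a*q^n) * (1 - b*q^n)) := by
    intro n
    have hs : ∀ x : ℂ, qPoch q x (n+1) = qPoch q x n * (1 - x * q ^ n) := fun x =>
      Finset.prod_range_succ _ n
    simp only [ht, hs]
    have h1 : (1 : ℂ) - q * q ^ n = 1 - q ^ (n+1) := by ring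
    rw [h1]
    rw [div_mul_eq_mul_div, div_mul_eq_mul_div, div_eq_div_iff
      (mul_ne_zero (mul_ne_zero (hpc n) (hcn n)) (mul_ne_zero (hpq n) (hq2 n)))
      (mul_ne_zero (hpc n) (hpq n))]
    ring
  have hqz : ‖q * z‖ < 1 := by
    rw [norm_mul]
    calc ‖q‖ * ‖z‖ ≤ 1 * ‖z‖ := by
          apply mul_le_mul_of_nonneg_right (le_of_lt hq) (norm_nonneg z)
      _ = ‖z‖ := one_mul _
      _ < 1 := hz
  have hq2z : ‖q^2 * z‖ < 1 := by
    rw [norm_mul, norm_pow]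
    calc ‖q‖ ^ 2 * ‖z‖ ≤ 1 * ‖z‖ := by
          apply mul_le_mul_of_nonneg_right _ (norm_nonneg z)
          exact le_of_lt (pow_lt_one₀ (norm_nonneg q) hq (by norm_num))
      _ = ‖z‖ := one_mul _
      _ < 1 := hz
  have hs0 : Summable (fun n : ℕ => t n * z ^ n) := bhg_summable q a b c hq hc z hz
  have hs1 : Summable (fun n : ℕ => t n * (q*z) ^ n) := bhg_summable q a b c hq hc _ hqz
  have hs2 : Summable (fun n : ℕ => t n * (q^2*z) ^ n) := bhg_summable q a b c hq hc _ hq2z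
  set F : ℕ → ℂ := fun n => (a*b*z - c/q) * (t n * (q^2*z)^n)
      - ((a+b)*z - (1+c/q)) * (t n * (q*z)^n) + (z-1) * (t n * z^n) with hF
  set G : ℕ → ℂ := fun n => t n * z^n * ((q^n - 1) * (q - c*q^n) / q) with hG
  have htel : ∀ n : ℕ, F n = G n - G (n+1) := by
    intro n
    have h := hrec n
    rw [hF, hG]
    simp only
    rw [show (q^2*z)^n = q^(2*n) * z^n by rw [mul_pow, ← pow_mul],
        show (q*z)^n = q^n * z^n by rw [mul_pow]]
    have hGn1 : t (n+1) * z^(n+1) * ((q^(n+1) - 1) * (q - c*q^(n+1)) / q)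
        = - (t n * ((1 - a*q^n) * (1 - b*q^n)) * z^(n+1)) := by
      have hkey : (q^(n+1) - 1) * (q - c*q^(n+1)) / q
          = - ((1 - c*q^n) * (1 - q^(n+1))) := by
        field_simp
        ring
      rw [hkey]
      linear_combination (-(z^(n+1))) * h
    rw [hGn1]
    field_simp
    ring
  have hsF : Summable F := by
    apply Summable.add
    · exact (hs2.mul_left _).sub (hs1.mul_left _)
    · exact hs0.mul_left _
  have hGtend : Tendsto G atTop (𝓝 0) := by
    have h1 : Tendsto (fun n : ℕ => t n * z^n) atTop (𝓝 0) := hs0.tendsto_atTop_zero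
    have h0 : Tendsto (fun n : ℕ => q ^ n) atTop (𝓝 0) :=
      tendsto_pow_atTop_nhds_zero_of_norm_lt_one (by simpa using hq)
    have h2 : Tendsto (fun n : ℕ => ((q:ℂ)^n - 1) * (q - c*q^n) / q) atTop
        (𝓝 ((0 - 1) * (q - c*0) / q)) := by
      apply Tendsto.div_const
      exact (h0.sub tendsto_const_nhds).mul (tendsto_const_nhds.sub (h0.const_mul c))
    have := h1.mul h2
    simpa using this
  have hFsum : ∑' n, F n = 0 := by
    have h1 : Tendsto (fun N => ∑ n ∈ Finset.range N, F n) atTop (𝓝 (∑' n, F n)) :=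
      hsF.hasSum.tendsto_sum_nat
    have h2 : ∀ N, ∑ n ∈ Finset.range N, F n = G 0 - G N := by
      intro N
      rw [show (fun n => F n) = (fun n => G n - G (n+1)) from funext htel]
      exact Finset.sum_range_sub' G N
    have h3 : Tendsto (fun N => ∑ n ∈ Finset.range N, F n) atTop (𝓝 (G 0 - 0)) := by
      rw [show (fun N => ∑ n ∈ Finset.range N, F n) = (fun N => G 0 - G N) from funext h2]
      exact tendsto_const_nhds.sub hGtend
    have hG0 : G 0 = 0 := by simp [hG]
    have := tendsto_nhds_unique h1 h3
    rw [this, hG0, sub_zero]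
  have hb0 : basicHypergeometric q a b c z = ∑' n, t n * z^n := rfl
  have hb1 : basicHypergeometric q a b c (q*z) = ∑' n, t n * (q*z)^n := rfl
  have hb2 : basicHypergeometric q a b c (q^2*z) = ∑' n, t n * (q^2*z)^n := rfl
  rw [hb0, hb1, hb2, ← tsum_mul_left, ← tsum_mul_left, ← tsum_mul_left,
    ← Summable.tsum_sub (hs2.mul_left _) (hs1.mul_left _),
    ← Summable.tsum_add ((hs2.mul_left _).sub (hs1.mul_left _)) (hs0.mul_left _)]
  exact hFsum

end Aux

set_option maxHeartbeats 2000000 in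
/-- The second solution at `0`,
`u(z) = (θ_q(z)/θ_q((q/c)z)) ₂φ₁(aq/c, bq/c; q²/c; q; z)`,
of the basic hypergeometric equation with parameters `(a,b,c)` in the non-resonant,
non-logarithmic case `c ∉ q^ℤ`. -/

theorem second_solution_at_zero_solves_basic_hypergeometric_equation
    (q : ℂ) (hq0 : 0 < ‖q‖) (hq1 : ‖q‖ < 1)
    (a b c : ℂ) (ha : a ≠ 0) (hb : b ≠ 0) (hc : c ≠ 0)
    (hcq : ∀ n : ℤ, c ≠ q ^ n)
    (u : ℂ → ℂ)
    (hu : ∀ z, u z = thetaQ q z / thetaQ q (q / c * z)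
      * basicHypergeometric q (a * q / c) (b * q / c) (q ^ 2 / c) z)
    (z : ℂ) (hz0 : z ≠ 0) (hz1 : ‖z‖ < 1)
    (hz2 : a * b * z ≠ c / q) (hz3 : thetaQ q (q / c * z) ≠ 0) :
    u (q ^ 2 * z) - ((a + b) * z - (1 + c / q)) / (a * b * z - c / q) * u (q * z)
      + (z - 1) / (a * b * z - c / q) * u z = 0 := by
  have hq0' : q ≠ 0 := by
    intro h; rw [h] at hq0; simp at hq0
  have hc' : ∀ n : ℕ, (q ^ 2 / c) * q ^ n ≠ 1 := by
    intro n h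
    have h2 := hcq ((n : ℤ) + 2)
    rw [show ((n : ℤ) + 2) = ((n + 2 : ℕ) : ℤ) by push_cast; ring, zpow_natCast] at h2
    apply h2
    have he : q ^ (n + 2) = c := by
      have : q ^ 2 * q ^ n = c := by
        field_simp at h
        linear_combination h
      rw [← this, ← pow_add]; ring_nf
    exact he.symm
  have hE := bhg_eqn q (a*q/c) (b*q/c) (q^2/c) hq1 hq0' hc' z hz1
  -- theta ratios
  set w : ℂ := q / c * z with hw
  have hw0 : w ≠ 0 := by
    rw [hw]; exact mul_ne_zero (div_ne_zero hq0' hc) hz0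
  have hth1 : thetaQ q (q * z) = -z⁻¹ * thetaQ q z := thetaQ_shift q z hq1 hq0' hz0
  have hth1w : thetaQ q (q * w) = -w⁻¹ * thetaQ q w := thetaQ_shift q w hq1 hq0' hw0
  have hqz0 : q * z ≠ 0 := mul_ne_zero hq0' hz0
  have hqw0 : q * w ≠ 0 := mul_ne_zero hq0' hw0
  have hth2 : thetaQ q (q ^ 2 * z) = -(q*z)⁻¹ * thetaQ q (q * z) := by
    rw [show q ^ 2 * z = q * (q * z) by ring]
    exact thetaQ_shift q (q*z) hq1 hq0' hqz0
  have hth2w : thetaQ q (q ^ 2 * w) = -(q*w)⁻¹ * thetaQ q (q * w) := by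
    rw [show q ^ 2 * w = q * (q * w) by ring]
    exact thetaQ_shift q (q*w) hq1 hq0' hqw0
  have harg1 : q / c * (q * z) = q * w := by rw [hw]; ring
  have harg2 : q / c * (q ^ 2 * z) = q ^ 2 * w := by rw [hw]; ring
  have hD : a * b * z - c / q ≠ 0 := sub_ne_zero.2 hz2
  set R : ℂ := thetaQ q z / thetaQ q w with hR
  have hrat1 : (-z⁻¹ * thetaQ q z) / (-w⁻¹ * thetaQ q w) = q / c * R := by
    rw [mul_div_mul_comm, neg_div_neg_eq, inv_div_inv, hR, hw, mul_div_cancel_right₀ _ hz0]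
  have hrat2 : (-(q*z)⁻¹ * (-z⁻¹ * thetaQ q z)) / (-(q*w)⁻¹ * (-w⁻¹ * thetaQ q w))
      = (q/c)^2 * R := by
    rw [mul_div_mul_comm, hrat1, neg_div_neg_eq, inv_div_inv, mul_div_mul_left _ _ hq0', hw,
      mul_div_cancel_right₀ _ hz0]
    ring
  have hu2 : u (q^2*z) = (q/c)^2 * R * basicHypergeometric q (a*q/c) (b*q/c) (q^2/c) (q^2*z) := by
    rw [hu (q^2*z), harg2, hth2w, hth1w, hth2, hth1, hrat2]
  have hu1 : u (q*z) = (q/c) * R * basicHypergeometric q (a*q/c) (b*q/c) (q^2/c) (q*z) := by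
    rw [hu (q*z), harg1, hth1w, hth1, hrat1]
  have hu0 : u z = R * basicHypergeometric q (a*q/c) (b*q/c) (q^2/c) z := by
    rw [hu z, hR, hw]
  rw [hu2, hu1, hu0]
  set Φ0 := basicHypergeometric q (a*q/c) (b*q/c) (q^2/c) z
  set Φ1 := basicHypergeometric q (a*q/c) (b*q/c) (q^2/c) (q*z)
  set Φ2 := basicHypergeometric q (a*q/c) (b*q/c) (q^2/c) (q^2*z)
  clear_value R Φ0 Φ1 Φ2
  set X2 := (q/c)^2 * R * Φ2 with hX2
  set X1 := q/c * R * Φ1 with hX1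
  set X0 := R * Φ0 with hX0
  set A := (a + b) * z - (1 + c/q) with hA
  set D := a * b * z - c/q with hDdef
  rw [div_mul_eq_mul_div, div_mul_eq_mul_div, sub_eq_add_neg, ← neg_div, add_assoc,
    ← add_div, add_eq_zero_iff_neg_eq, eq_comm, div_eq_iff hD]
  rw [hX2, hX1, hX0, hA, hDdef]
  field_simp at hE ⊢
  apply mul_left_cancel₀ (pow_ne_zero 2 hc : (c:ℂ)^2 ≠ 0)
  linear_combination c ^ 2 * R * hE
end

section
/- Let q ∈ ℂ with 0 < |q| < 1, let a ∈ ℂ∖{0} with a ∉ q^ℤ, let D ∈ ℂ∖{0}, let α ∈ ℝ, and let h(z) = exp(α·Log z) for a fixed branch Log of the logarithm on the slit plane U = ℂ∖[0,∞). Then the function z ↦ D·h(z)·θ_q(az)/θ_q(z) is not identically equal to 1 on the set of z ∈ U where θ_q(z) ≠ 0. -/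
open Complex Metric Filter Topology

/-- The slit plane `U = ℂ ∖ [0,∞)`. -/
def slitPlane' : Set ℂ := {z : ℂ | ¬ (0 ≤ z.re ∧ z.im = 0)}

/-- compatibility: the complex absolute value as the norm -/
noncomputable def Complex.abs : AbsoluteValue ℂ ℝ := IsAbsoluteValue.toAbsoluteValue (norm : ℂ → ℝ)

lemma Complex.norm_eq_abs (z : ℂ) : ‖z‖ = Complex.abs z := rfl

lemma Complex.continuous_abs : Continuous Complex.abs := continuous_norm

lemma Complex.abs_exp (z : ℂ) : Complex.abs (Complex.exp z) = Real.exp z.re := Complex.norm_exp z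

lemma Complex.abs_re_le_abs (z : ℂ) : |z.re| ≤ Complex.abs z := Complex.abs_re_le_norm z

section Aux
variable {q : ℂ}

lemma half_bound {q x : ℂ} (hq1 : Complex.abs q < 1) (hx : Complex.abs x ≤ 1/2) (k : ℕ) :
    Complex.abs (x * q ^ k) ≤ 1/2 * Complex.abs q ^ k := by
  rw [map_mul, map_pow]
  exact mul_le_mul_of_nonneg_right hx (pow_nonneg (Complex.abs.nonneg q) k)

lemma half_bound' {q x : ℂ} (hq1 : Complex.abs q < 1) (hx : Complex.abs x ≤ 1/2) (k : ℕ) :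
    Complex.abs (x * q ^ k) ≤ 1/2 := by
  refine (half_bound hq1 hx k).trans ?_
  have : Complex.abs q ^ k ≤ 1 := pow_le_one₀ (Complex.abs.nonneg q) hq1.le
  linarith

lemma factor_ne_zero {q x : ℂ} (hq1 : Complex.abs q < 1) (hx : Complex.abs x ≤ 1/2) (k : ℕ) :
    (1 : ℂ) - x * q ^ k ≠ 0 := by
  intro h
  have h1 : x * q ^ k = 1 := by linear_combination -h
  have := half_bound' hq1 hx k
  rw [h1] at this; simp at this; linarith

lemma summable_log_small {q x : ℂ} (hq1 : Complex.abs q < 1) (hx : Complex.abs x ≤ 1/2) :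
    Summable fun k : ℕ => Complex.log (1 - x * q ^ k) := by
  apply Summable.of_norm_bounded (g := fun k => 3/2 * (1/2 * Complex.abs q ^ k))
  · exact (Summable.mul_left _ ((summable_geometric_of_lt_one (Complex.abs.nonneg q)
      hq1).mul_left (1/2)))
  · intro k
    have hb : ‖-(x * q ^ k)‖ ≤ 1/2 := by
      rw [norm_neg, Complex.norm_eq_abs]; exact half_bound' hq1 hx k
    have := Complex.norm_log_one_add_half_le_self hb
    rw [show (1 : ℂ) + -(x * q^k) = 1 - x * q^k by ring] at this
    refine this.trans ?_
    rw [norm_neg, Complex.norm_eq_abs]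
    have := half_bound hq1 hx k
    nlinarith [pow_nonneg (Complex.abs.nonneg q) k]

lemma mem_cb {x : ℂ} (hx : Complex.abs x ≤ 1/2) : x ∈ closedBall (0:ℂ) (1/2) := by
  simpa [mem_closedBall_zero_iff, ← Complex.norm_eq_abs] using hx

lemma abs_of_mem_cb {x : ℂ} (hx : x ∈ closedBall (0:ℂ) (1/2)) : Complex.abs x ≤ 1/2 := by
  simpa [mem_closedBall_zero_iff, ← Complex.norm_eq_abs] using hx

lemma qPochInf_eq_exp_small {q : ℂ} (hq1 : Complex.abs q < 1) {x : ℂ}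
    (hx : Complex.abs x ≤ 1/2) :
    qPochInf q x = Complex.exp (∑' k : ℕ, Complex.log (1 - x * q ^ k)) := by
  have h2 := Complex.cexp_tsum_eq_tprod (f := fun k => 1 - x * q ^ k)
    (fun k => factor_ne_zero hq1 hx k) (summable_log_small hq1 hx)
  simpa [qPochInf] using h2.symm

lemma qPochInf_ne_zero_small {q : ℂ} (hq1 : Complex.abs q < 1) {x : ℂ}
    (hx : Complex.abs x ≤ 1/2) : qPochInf q x ≠ 0 := by
  rw [qPochInf_eq_exp_small hq1 hx]; exact Complex.exp_ne_zero _

lemma multipliable_small {q : ℂ} (hq1 : Complex.abs q < 1) {x : ℂ}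
    (hx : Complex.abs x ≤ 1/2) :
    Multipliable fun k : ℕ => (1 : ℂ) - x * q ^ k :=
  Complex.multipliable_of_summable_log (summable_log_small hq1 hx)

lemma continuousOn_qPochInf_small {q : ℂ} (hq1 : Complex.abs q < 1) :
    ContinuousOn (qPochInf q) (closedBall (0:ℂ) (1/2)) := by
  rw [continuousOn_iff_continuous_restrict]
  have heq : (closedBall (0:ℂ) (1/2)).domRestrict (qPochInf q) =
      fun x : closedBall (0:ℂ) (1/2) =>
        Complex.exp (∑' k : ℕ, Complex.log (1 - (x:ℂ) * q ^ k)) := by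
    funext x; exact qPochInf_eq_exp_small hq1 (abs_of_mem_cb x.2)
  rw [heq]
  apply Complex.continuous_exp.comp
  apply continuous_tsum (u := fun k => 3/2 * (1/2 * Complex.abs q ^ k))
  · intro k
    rw [continuous_iff_continuousAt]
    intro x
    refine ContinuousAt.clog ((continuous_const.sub ((continuous_subtype_val).mul continuous_const)).continuousAt) ?_
    ·
      have := half_bound' hq1 (abs_of_mem_cb x.2) k
      apply Complex.mem_slitPlane_iff.mpr
      left
      have hre : |((x:ℂ) * q ^ k).re| ≤ Complex.abs ((x:ℂ) * q ^ k) :=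
        Complex.abs_re_le_abs ((x:ℂ) * q ^ k)
      simp only [Complex.sub_re, Complex.one_re]
      linarith [abs_le.mp (hre.trans this) |>.2]
  · exact (Summable.mul_left _ ((summable_geometric_of_lt_one (Complex.abs.nonneg q)
      hq1).mul_left (1/2)))
  · intro k x
    have hb : ‖-((x:ℂ) * q ^ k)‖ ≤ 1/2 := by
      rw [norm_neg, Complex.norm_eq_abs]; exact half_bound' hq1 (abs_of_mem_cb x.2) k
    have := Complex.norm_log_one_add_half_le_self hb
    rw [show (1 : ℂ) + -((x:ℂ) * q^k) = 1 - (x:ℂ) * q^k by ring] at this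
    refine this.trans ?_
    rw [norm_neg, Complex.norm_eq_abs]
    have := half_bound hq1 (abs_of_mem_cb x.2) k
    nlinarith [pow_nonneg (Complex.abs.nonneg q) k]

lemma exists_K (hq1 : Complex.abs q < 1) (c : ℝ) :
    ∃ K : ℕ, c * Complex.abs q ^ K ≤ 1/2 := by
  rcases le_or_gt c 0 with hc | hc
  · exact ⟨0, by nlinarith⟩
  · obtain ⟨K, hK⟩ := exists_pow_lt_of_lt_one (by positivity : (0:ℝ) < 1/(2*c)) hq1
    refine ⟨K, ?_⟩
    rw [lt_div_iff₀ (by positivity : (0:ℝ) < 2*c)] at hK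
    nlinarith

lemma qPochInf_factor (hq1 : Complex.abs q < 1) (x : ℂ) (K : ℕ)
    (hK : Complex.abs (x * q ^ K) ≤ 1/2) :
    qPochInf q x = (∏ k ∈ Finset.range K, (1 - x * q ^ k)) * qPochInf q (x * q ^ K) := by
  have hm : Multipliable fun k : ℕ => (1:ℂ) - x * q ^ (k + K) := by
    have := multipliable_small hq1 hK
    refine this.congr fun k => ?_
    rw [pow_add]; ring
  have h1 := Multipliable.prod_mul_tprod_nat_mul' (f := fun k => (1:ℂ) - x * q ^ k) (k := K) hm
  have h2 : qPochInf q (x * q ^ K) = ∏' k : ℕ, ((1:ℂ) - x * q ^ (k + K)) := by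
    unfold qPochInf
    exact tprod_congr fun k => by rw [pow_add]; ring
  rw [qPochInf, ← h1, h2]

lemma qPochInf_continuousAt (hq1 : Complex.abs q < 1) (x₀ : ℂ) :
    ContinuousAt (qPochInf q) x₀ := by
  obtain ⟨K, hK⟩ := exists_K hq1 (Complex.abs x₀ + 1)
  have hball : ∀ x ∈ closedBall x₀ 1, Complex.abs (x * q ^ K) ≤ 1/2 := by
    intro x hx
    rw [map_mul, map_pow]
    have h1 : Complex.abs x ≤ Complex.abs x₀ + 1 := by
      have := mem_closedBall_iff_norm.mp hx
      calc Complex.abs x = ‖x - x₀ + x₀‖ := by rw [Complex.norm_eq_abs]; ring_nf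
        _ ≤ ‖x - x₀‖ + ‖x₀‖ := norm_add_le _ _
        _ ≤ Complex.abs x₀ + 1 := by rw [Complex.norm_eq_abs x₀]; linarith
    refine le_trans ?_ hK
    exact mul_le_mul_of_nonneg_right h1 (pow_nonneg (Complex.abs.nonneg q) K)
  have hcont : ContinuousOn
      (fun x => (∏ k ∈ Finset.range K, (1 - x * q ^ k)) * qPochInf q (x * q ^ K))
      (closedBall x₀ 1) := by
    apply ContinuousOn.mul
    · exact (continuous_finset_prod _ fun k _ =>
        continuous_const.sub (continuous_id.mul continuous_const)).continuousOn
    · refine (continuousOn_qPochInf_small hq1).comp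
        ((continuous_id.mul continuous_const).continuousOn) ?_
      intro x hx
      simpa [mem_closedBall_zero_iff, ← Complex.norm_eq_abs] using hball x hx
  have heq : Set.EqOn (qPochInf q)
      (fun x => (∏ k ∈ Finset.range K, (1 - x * q ^ k)) * qPochInf q (x * q ^ K))
      (closedBall x₀ 1) := fun x hx => qPochInf_factor hq1 x K (hball x hx)
  exact (hcont.congr heq).continuousAt (closedBall_mem_nhds x₀ one_pos)

lemma qPochInf_ne_zero (hq1 : Complex.abs q < 1) {x : ℂ} (hx : ∀ k : ℕ, x * q ^ k ≠ 1) :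
    qPochInf q x ≠ 0 := by
  obtain ⟨K, hK⟩ := exists_K hq1 (Complex.abs x)
  rw [qPochInf_factor hq1 x K (by rw [map_mul, map_pow]; exact hK)]
  apply mul_ne_zero
  · rw [Finset.prod_ne_zero_iff]
    exact fun k _ => sub_ne_zero.mpr (Ne.symm (hx k))
  · exact qPochInf_ne_zero_small hq1 (by rw [map_mul, map_pow]; exact hK)

lemma qPochInf_eq_zero (hq1 : Complex.abs q < 1) {x : ℂ} (k₀ : ℕ) (hx : x * q ^ k₀ = 1) :
    qPochInf q x = 0 := by
  obtain ⟨K₁, hK₁⟩ := exists_K hq1 (Complex.abs x)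
  set K := max K₁ (k₀ + 1) with hKdef
  have hK : Complex.abs (x * q ^ K) ≤ 1/2 := by
    rw [map_mul, map_pow]
    have : Complex.abs q ^ K ≤ Complex.abs q ^ K₁ :=
      pow_le_pow_of_le_one (Complex.abs.nonneg q) hq1.le (le_max_left _ _)
    refine le_trans ?_ hK₁
    exact mul_le_mul_of_nonneg_left this (Complex.abs.nonneg x)
  rw [qPochInf_factor hq1 x K hK]
  have : (∏ k ∈ Finset.range K, (1 - x * q ^ k)) = 0 := by
    apply Finset.prod_eq_zero (Finset.mem_range.mpr (lt_of_lt_of_le (Nat.lt_succ_self k₀)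
      (le_max_right _ _)))
    rw [hx]; ring
  rw [this, zero_mul]

lemma thetaQ_ne_zero (hq : q ≠ 0) (hq1 : Complex.abs q < 1) {z : ℂ} (hz0 : z ≠ 0)
    (hz : ∀ n : ℤ, z ≠ q ^ n) : thetaQ q z ≠ 0 := by
  unfold thetaQ
  have hA : qPochInf q q ≠ 0 := by
    apply qPochInf_ne_zero hq1
    intro k h
    have : Complex.abs (q ^ (k+1)) < 1 := by
      rw [map_pow]; exact pow_lt_one₀ (Complex.abs.nonneg q) hq1 (Nat.succ_ne_zero k)
    rw [show q ^ (k+1) = q * q ^ k by ring, h] at this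
    simp at this
  have hB : qPochInf q z ≠ 0 := by
    apply qPochInf_ne_zero hq1
    intro k h
    apply hz (-(k:ℤ))
    rw [zpow_neg, zpow_natCast]
    exact eq_inv_of_mul_eq_one_left (by linear_combination h)
  have hC : qPochInf q (q / z) ≠ 0 := by
    apply qPochInf_ne_zero hq1
    intro k h
    apply hz ((k:ℤ) + 1)
    have : z = q ^ (k + 1) := by
      field_simp at h
      rw [← h]; ring
    rw [this, ← zpow_natCast q (k+1)]
    push_cast
    ring_nf
  exact mul_ne_zero (mul_ne_zero hA hB) hC

lemma thetaQ_zero (hq : q ≠ 0) (hq1 : Complex.abs q < 1) (n : ℤ) : thetaQ q (q ^ n) = 0 := by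
  unfold thetaQ
  rcases n with m | m
  · rcases m with _ | j
    · have : qPochInf q (q ^ (Int.ofNat 0)) = 0 := by
        apply qPochInf_eq_zero hq1 0
        simp
      rw [this]; ring
    · have : qPochInf q (q / q ^ (Int.ofNat (j+1))) = 0 := by
        apply qPochInf_eq_zero hq1 j
        have hpow : (q : ℂ) ^ (Int.ofNat (j+1)) = q ^ (j+1) := by
          rw [Int.ofNat_eq_coe, zpow_natCast]
        rw [hpow]
        field_simp
        ring
      rw [this]; ring
  · have : qPochInf q (q ^ (Int.negSucc m)) = 0 := by
      apply qPochInf_eq_zero hq1 (m+1)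
      rw [zpow_negSucc]
      exact inv_mul_cancel₀ (pow_ne_zero _ hq)
    rw [this]; ring

lemma thetaQ_continuousAt (hq1 : Complex.abs q < 1) {z₀ : ℂ} (hz0 : z₀ ≠ 0) :
    ContinuousAt (thetaQ q) z₀ := by
  unfold thetaQ
  exact (continuousAt_const.mul (qPochInf_continuousAt hq1 z₀)).mul
    ((qPochInf_continuousAt hq1 (q / z₀)).comp (continuousAt_const.div continuousAt_id hz0))

end Aux

/-- positive real from membership on the nonneg real axis -/
lemma pos_real_of (w : ℂ) (hw : w ≠ 0) (h1 : 0 ≤ w.re) (h2 : w.im = 0) :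
    ∃ r : ℝ, 0 < r ∧ w = (r : ℂ) := by
  refine ⟨w.re, ?_, ?_⟩
  · rcases lt_or_eq_of_le h1 with h | h
    · exact h
    · exfalso; apply hw; apply Complex.ext <;> simp [← h, h2]
  · apply Complex.ext <;> simp [h2]

/-- For `a ∉ q^ℤ`, the function `z ↦ D z^α θ_q(az)/θ_q(z)` is not identically `1`
on the set of `z` in the slit plane where `θ_q(z) ≠ 0`. -/
theorem thetaQ_twisted_ratio_not_identically_one
    (q : ℂ) (hq0 : 0 < ‖q‖) (hq1 : ‖q‖ < 1)
    (a : ℂ) (ha : a ≠ 0) (haq : ∀ n : ℤ, a ≠ q ^ n)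
    (D : ℂ) (hD : D ≠ 0) (α : ℝ)
    (Log : ℂ → ℂ) (hLog : ∀ z ∈ slitPlane', Complex.exp (Log z) = z)
    (hLogHolo : DifferentiableOn ℂ Log slitPlane')
    (h : ℂ → ℂ) (hh : ∀ z, h z = Complex.exp ((α : ℂ) * Log z)) :
    ¬ (∀ z ∈ slitPlane', thetaQ q z ≠ 0 →
        D * h z * thetaQ q (a * z) / thetaQ q z = 1) := by
  intro H
  have hqne : q ≠ 0 := by
    intro hq; rw [hq] at hq0; simp at hq0
  by_cases hc : ∃ n : ℤ, (q ^ n / a) ∈ slitPlane'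
  · obtain ⟨n, hn⟩ := hc
    set z := q ^ n / a with hzdef
    have hz0 : z ≠ 0 := div_ne_zero (zpow_ne_zero n hqne) ha
    have hznotq : ∀ m : ℤ, z ≠ q ^ m := by
      intro m hm
      apply haq (n - m)
      have hqm : (q : ℂ) ^ m ≠ 0 := zpow_ne_zero m hqne
      rw [hzdef] at hm
      have hm2 : q ^ n = q ^ m * a := (div_eq_iff ha).mp hm
      rw [zpow_sub₀ hqne, eq_div_iff hqm]
      linear_combination -hm2
    have hθz : thetaQ q z ≠ 0 := thetaQ_ne_zero hqne hq1 hz0 hznotq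
    have haz : a * z = q ^ n := by rw [hzdef]; field_simp
    have := H z hn hθz
    rw [haz, thetaQ_zero hqne hq1 n] at this
    simp at this
  · push_neg at hc
    have hmem : ∀ n : ℤ, 0 ≤ (q ^ n / a).re ∧ (q ^ n / a).im = 0 := by
      intro n
      have := hc n
      unfold slitPlane' at this
      simpa [Set.mem_setOf_eq, not_not] using this
    -- q is a positive real
    have hq_real : ∃ qr : ℝ, 0 < qr ∧ q = (qr : ℂ) := by
      obtain ⟨h0re, h0im⟩ := hmem 0
      obtain ⟨h1re, h1im⟩ := hmem 1
      rw [zpow_zero] at h0re h0im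
      rw [zpow_one] at h1re h1im
      obtain ⟨s, hs, hseq⟩ := pos_real_of (1/a) (by simp [ha]) h0re h0im
      obtain ⟨t, ht, hteq⟩ := pos_real_of (q/a) (div_ne_zero hqne ha) h1re h1im
      refine ⟨t / s, by positivity, ?_⟩
      have hane : (1/a : ℂ) ≠ 0 := by simp [ha]
      have : q * (1/a) = q / a := by ring
      rw [Complex.ofReal_div, ← hseq, ← hteq, ← this]
      field_simp
    obtain ⟨qr, hqr, hqeq⟩ := hq_real
    have hθa : thetaQ q a ≠ 0 := thetaQ_ne_zero hqne hq1 ha haq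
    set F : ℝ → ℝ := fun t => Complex.abs D *
      Real.exp (α * Real.log (Complex.abs (1 + t * Complex.I))) *
      Complex.abs (thetaQ q (a * (1 + t * Complex.I))) with hFdef
    set G : ℝ → ℝ := fun t => Complex.abs (thetaQ q (1 + t * Complex.I)) with hGdef
    have key : ∀ t : ℝ, t ≠ 0 → F t = G t := by
      intro t ht
      set z : ℂ := 1 + t * Complex.I with hzdef
      have hzim : z.im = t := by simp [hzdef]
      have hzslit : z ∈ slitPlane' := by
        intro hmem'
        exact ht (by rw [← hzim, hmem'.2])
      have hz0 : z ≠ 0 := by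
        intro h0
        apply ht
        rw [← hzim, h0]; simp
      have hznotq : ∀ m : ℤ, z ≠ q ^ m := by
        intro m hm
        apply ht
        rw [← hzim, hm, hqeq]
        simp [← Complex.ofReal_zpow]
      have hθz := thetaQ_ne_zero hqne hq1 hz0 hznotq
      have heq := H z hzslit hθz
      have heq2 : D * h z * thetaQ q (a * z) = thetaQ q z := by
        rw [div_eq_one_iff_eq hθz] at heq
        exact heq
      have hRe : (Log z).re = Real.log (Complex.abs z) := by
        have hl := hLog z hzslit
        have habs : Complex.abs z = Real.exp ((Log z).re) := by
          conv_lhs => rw [← hl]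
          exact Complex.abs_exp _
        rw [habs, Real.log_exp]
      have hhz : Complex.abs (h z) = Real.exp (α * Real.log (Complex.abs z)) := by
        rw [hh z, Complex.abs_exp]
        congr 1
        rw [show ((α : ℂ) * Log z).re = α * (Log z).re by
          simp [Complex.mul_re]]
        rw [hRe]
      have : Complex.abs (D * h z * thetaQ q (a * z)) = Complex.abs (thetaQ q z) := by
        rw [heq2]
      rw [map_mul, map_mul, hhz] at this
      exact this
    have hFlim : Tendsto F (𝓝[≠] (0 : ℝ)) (𝓝 (Complex.abs D * 1 * Complex.abs (thetaQ q a))) := by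
      apply tendsto_nhdsWithin_of_tendsto_nhds
      have hc1 : ContinuousAt (fun t : ℝ => (1 + t * Complex.I : ℂ)) 0 := by fun_prop
      have habs : ContinuousAt (fun t : ℝ => Complex.abs (1 + t * Complex.I)) 0 :=
        ContinuousAt.comp (g := (Complex.abs : ℂ → ℝ))
          (f := fun t : ℝ => (1 + t * Complex.I : ℂ))
          Complex.continuous_abs.continuousAt hc1
      have hlog : ContinuousAt (fun t : ℝ => Real.log (Complex.abs (1 + t * Complex.I))) 0 :=
        habs.log (by simp)
      have hcmid : ContinuousAt (fun t : ℝ =>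
          Real.exp (α * Real.log (Complex.abs (1 + t * Complex.I)))) 0 :=
        (continuousAt_const.mul hlog).rexp
      have hinner : ContinuousAt (fun t : ℝ => thetaQ q (a * (1 + t * Complex.I))) 0 :=
        ContinuousAt.comp (g := thetaQ q) (f := fun t : ℝ => a * (1 + t * Complex.I))
          (thetaQ_continuousAt hq1 (z₀ := a * (1 + ((0:ℝ):ℂ) * Complex.I)) (by simp [ha]))
          (by fun_prop)
      have hclast : ContinuousAt (fun t : ℝ =>
          Complex.abs (thetaQ q (a * (1 + t * Complex.I)))) 0 :=
        ContinuousAt.comp (g := (Complex.abs : ℂ → ℝ))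
          (f := fun t : ℝ => thetaQ q (a * (1 + t * Complex.I)))
          Complex.continuous_abs.continuousAt hinner
      have hF : ContinuousAt F 0 := by
        rw [hFdef]
        exact (continuousAt_const.mul hcmid).mul hclast
      have h0 : F 0 = Complex.abs D * 1 * Complex.abs (thetaQ q a) := by
        simp [hFdef]
      rw [← h0]
      exact hF.tendsto
    have hGlim : Tendsto G (𝓝[≠] (0 : ℝ)) (𝓝 0) := by
      apply tendsto_nhdsWithin_of_tendsto_nhds
      have hc1 : ContinuousAt (fun t : ℝ => (1 + t * Complex.I : ℂ)) 0 := by fun_prop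
      have hG : ContinuousAt G 0 := by
        rw [hGdef]
        have hinner : ContinuousAt (fun t : ℝ => thetaQ q (1 + t * Complex.I)) 0 :=
          ContinuousAt.comp (g := thetaQ q) (f := fun t : ℝ => (1 + t * Complex.I : ℂ))
            (thetaQ_continuousAt hq1 (z₀ := 1 + ((0:ℝ):ℂ) * Complex.I) (by simp)) hc1
        exact ContinuousAt.comp (g := (Complex.abs : ℂ → ℝ))
          (f := fun t : ℝ => thetaQ q (1 + t * Complex.I))
          Complex.continuous_abs.continuousAt hinner
      have h0 : G 0 = 0 := by
        have h1 : (1 + ((0:ℝ):ℂ) * Complex.I : ℂ) = q ^ (0 : ℤ) := by simp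
        simp only [hGdef]
        rw [h1, thetaQ_zero hqne hq1 0]
        simp
      have := hG.tendsto
      rw [h0] at this
      exact this
    have hEq : F =ᶠ[𝓝[≠] (0:ℝ)] G := by
      filter_upwards [self_mem_nhdsWithin] with t ht
      exact key t ht
    have : Complex.abs D * 1 * Complex.abs (thetaQ q a) = 0 :=
      tendsto_nhds_unique (hFlim.congr' hEq) hGlim
    have hDpos : 0 < Complex.abs D := Complex.abs.pos hD
    have hapos : 0 < Complex.abs (thetaQ q a) := Complex.abs.pos hθa
    nlinarith
end
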